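/- Let 0 < p < ∞, 1 ≤ s < ∞ and -n < α < ∞. Then the Schwartz class S(ℝⁿ) is contained in BL^{p,s}_{|x|^α}(ℝⁿ). -/

import Mathlib

open MeasureTheory Metric ENNReal Filter
open scoped ENNReal NNReal

noncomputable section

abbrev Rn (n : ℕ) := EuclideanSpace ℝ (Fin n)

/-- A `(p,s,α)`-block: supported in a closed ball `B(x₀,r)` with
`‖a‖_{L^s} ≤ |B|^{-α/(pn)-1/p+1/s}` (with `1/s = 0` when `s = ∞`). -/
def IsBlock (n : ℕ) (p : ℝ) (s : ℝ≥0∞) (α : ℝ) (a : Rn n → ℝ) : Prop :=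
  Measurable a ∧
  ∃ x₀ : Rn n, ∃ r : ℝ, 0 < r ∧ (∀ x, x ∉ closedBall x₀ r → a x = 0) ∧
    eLpNorm a s volume ≤
      ENNReal.ofReal ((volume (closedBall x₀ r)).toReal ^ (-α / (p * n) - 1 / p + s.toReal⁻¹))

/-- A decomposition `f = Σ l k • a k` (a.e. convergence) into `(p,s,α)`-blocks with
`Σ |l k| ^ min p 1 < ∞`. -/
def IsBLDecomp (n : ℕ) (p : ℝ) (s : ℝ≥0∞) (α : ℝ)
    (f : Rn n → ℝ) (l : ℕ → ℝ) (a : ℕ → Rn n → ℝ) : Prop :=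
  (∀ k, IsBlock n p s α (a k)) ∧ Summable (fun k => |l k| ^ min p 1) ∧
  (∀ᵐ x : Rn n ∂volume, HasSum (fun k => l k * a k x) (f x))

/-- Membership in the block space `BL^{p,s}_{|x|^α}`. -/
def MemBL (n : ℕ) (p : ℝ) (s : ℝ≥0∞) (α : ℝ) (f : Rn n → ℝ) : Prop :=
  ∃ l a, IsBLDecomp n p s α f l a

/-- The quasinorm of `BL^{p,s}_{|x|^α}`:
`inf (Σ |l k| ^ min p 1)^(1/min p 1)` over all block decompositions. -/
def BLnorm (n : ℕ) (p : ℝ) (s : ℝ≥0∞) (α : ℝ) (f : Rn n → ℝ) : ℝ :=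
  sInf { c | ∃ l a, IsBLDecomp n p s α f l a ∧
    c = (∑' k, |l k| ^ min p 1) ^ (min p 1)⁻¹ }

lemma aux_rpow_add_le {x y z : ℝ} (hx : 0 ≤ x) (hy : 0 ≤ y) (hz0 : 0 ≤ z) (hz1 : z ≤ 1) :
    (x + y) ^ z ≤ x ^ z + y ^ z := by
  have h := NNReal.rpow_add_le_add_rpow x.toNNReal y.toNNReal hz0 hz1
  have hxy : ((x.toNNReal + y.toNNReal : ℝ≥0) : ℝ) = x + y := by
    push_cast [Real.coe_toNNReal _ hx, Real.coe_toNNReal _ hy]; ring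
  calc (x + y) ^ z = (((x.toNNReal + y.toNNReal : ℝ≥0) : ℝ)) ^ z := by rw [hxy]
    _ = (((x.toNNReal + y.toNNReal) ^ z : ℝ≥0) : ℝ) := by rw [NNReal.coe_rpow]
    _ ≤ ((x.toNNReal ^ z + y.toNNReal ^ z : ℝ≥0) : ℝ) := by exact_mod_cast h
    _ = x ^ z + y ^ z := by
        push_cast [NNReal.coe_rpow, Real.coe_toNNReal _ hx, Real.coe_toNNReal _ hy]; ring

/-- for `0 < p < ∞`, `1 ≤ s < ∞`, `-n < α`, the Schwartz class is
contained in `BL^{p,s}_{|x|^α}`. -/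
theorem schwartz_subset_BL (n : ℕ) (hn : 0 < n) (p : ℝ) (s : ℝ≥0∞) (α : ℝ)
    (hp : 0 < p) (hs1 : 1 ≤ s) (hs2 : s ≠ ∞) (hα : -(n : ℝ) < α) :
    ∀ f : SchwartzMap (Rn n) ℝ, MemBL n p s α (⇑f) := by
  intro f
  have hq0 : (0:ℝ) < min p 1 := lt_min hp one_pos
  have hq1 : min p 1 ≤ 1 := min_le_right _ _
  have hs0 : s ≠ 0 := (zero_lt_one.trans_le hs1).ne'
  have hspos : 0 < s.toReal := ENNReal.toReal_pos hs0 hs2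
  have hn0 : (0:ℝ) < (n:ℝ) := by exact_mod_cast hn
  -- the exponent β
  set β : ℝ := α / (p * n) + 1 / p with hβdef
  have hβ : 0 < β := by
    have hpn : 0 < p * n := mul_pos hp hn0
    have h1 : -(n:ℝ) / (p * n) < α / (p * n) := div_lt_div_of_pos_right hα hpn
    have h2 : -(n:ℝ) / (p * n) = -(1 / p) := by
      field_simp
    rw [h2] at h1
    rw [hβdef]; linarith
  -- the decay order m
  set m : ℕ := ⌈(n:ℝ) * β + 2 / min p 1⌉₊ + 1 with hmdef
  have hm : (n:ℝ) * β + 2 / min p 1 ≤ (m:ℝ) := by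
    refine (Nat.le_ceil _).trans ?_
    rw [hmdef]; push_cast; linarith
  have hexp : ((n:ℝ) * β - m) * min p 1 ≤ -2 := by
    have h1 : (n:ℝ) * β - m ≤ -(2 / min p 1) := by linarith
    have h2 := mul_le_mul_of_nonneg_right h1 hq0.le
    have h3 : -(2 / min p 1) * min p 1 = -2 := by
      field_simp
    exact h2.trans_eq h3
  -- Schwartz decay bound
  obtain ⟨C, hC0, hC⟩ : ∃ C : ℝ, 0 ≤ C ∧ ∀ x : Rn n, (1 + ‖x‖) ^ m * ‖f x‖ ≤ C := by
    have hC' : ∀ x : Rn n, (1 + ‖x‖) ^ m * ‖f x‖ ≤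
        2 ^ m * ((Finset.Iic (m, 0)).sup fun mm => SchwartzMap.seminorm ℝ mm.1 mm.2) f := by
      intro x
      simpa [norm_iteratedFDeriv_zero] using
        SchwartzMap.one_add_le_sup_seminorm_apply (𝕜 := ℝ) (m := (m, 0)) le_rfl le_rfl f x
    refine ⟨_, le_trans ?_ (hC' 0), hC'⟩
    positivity
  -- annuli
  set A : ℕ → Set (Rn n) := fun k => {x | (k:ℝ) ≤ ‖x‖ ∧ ‖x‖ < (k:ℝ) + 1} with hA
  have hAmeas : ∀ k, MeasurableSet (A k) := by
    intro k
    rw [hA]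
    simp only [Set.setOf_and]
    exact (measurableSet_le measurable_const measurable_norm).inter
      (measurableSet_lt measurable_norm measurable_const)
  have hAsub : ∀ k, A k ⊆ closedBall (0 : Rn n) ((k:ℝ) + 1) := by
    intro k x hx
    exact mem_closedBall_zero_iff.mpr hx.2.le
  -- truncations
  set g : ℕ → Rn n → ℝ := fun k => (A k).indicator f with hg
  have hfx_bound : ∀ k, ∀ x ∈ A k, ‖f x‖ ≤ C / ((k:ℝ) + 1) ^ m := by
    intro k x hx
    have ht : (0:ℝ) < ((k:ℝ) + 1) ^ m := by positivity
    rw [le_div_iff₀ ht]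
    calc ‖f x‖ * ((k:ℝ) + 1) ^ m = ((k:ℝ) + 1) ^ m * ‖f x‖ := by ring
      _ ≤ (1 + ‖x‖) ^ m * ‖f x‖ := by
          have h1k : (k:ℝ) + 1 ≤ 1 + ‖x‖ := by have := hx.1; linarith
          have h0k : (0:ℝ) ≤ (k:ℝ) + 1 := by positivity
          gcongr
      _ ≤ C := hC x
  have hgle : ∀ k, eLpNorm (g k) s volume ≤
      (volume (closedBall (0 : Rn n) ((k:ℝ) + 1))) ^ s.toReal⁻¹ *
        ENNReal.ofReal (C / ((k:ℝ) + 1) ^ m) := by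
    intro k
    rw [hg]
    rw [eLpNorm_indicator_eq_eLpNorm_restrict (hAmeas k)]
    refine le_trans (eLpNorm_le_of_ae_bound ((ae_restrict_iff' (hAmeas k)).mpr
      (Eventually.of_forall fun x hx => hfx_bound k x hx))) ?_
    rw [Measure.restrict_apply_univ]
    exact mul_le_mul_left (ENNReal.rpow_le_rpow (measure_mono (hAsub k))
      (inv_nonneg.mpr hspos.le)) _
  have hgfin : ∀ k, eLpNorm (g k) s volume ≠ ∞ := by
    intro k
    refine ((hgle k).trans_lt ?_).ne
    exact ENNReal.mul_lt_top
      (ENNReal.rpow_lt_top_of_nonneg (inv_nonneg.mpr hspos.le) measure_closedBall_lt_top.ne)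
      ENNReal.ofReal_lt_top
  -- quantities
  set D : ℕ → ℝ := fun k => (eLpNorm (g k) s volume).toReal with hD
  set V : ℕ → ℝ := fun k => (volume (closedBall (0 : Rn n) ((k:ℝ) + 1))).toReal with hV
  set W : ℝ := (volume (ball (0 : Rn n) 1)).toReal with hW
  set e : ℝ := -α / (p * ↑n) - 1 / p + s.toReal⁻¹ with he
  set b : ℕ → ℝ := fun k => V k ^ e with hb
  set c : ℕ → ℝ := fun k => D k / b k + (1/2 : ℝ) ^ k with hc
  have hVpos : ∀ k, 0 < V k := fun k =>
    ENNReal.toReal_pos (measure_closedBall_pos volume 0 (by positivity)).ne'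
      measure_closedBall_lt_top.ne
  have hWpos : 0 < W :=
    ENNReal.toReal_pos (measure_ball_pos volume 0 one_pos).ne' measure_ball_lt_top.ne
  have hbpos : ∀ k, 0 < b k := fun k => Real.rpow_pos_of_pos (hVpos k) e
  have hDnn : ∀ k, 0 ≤ D k := fun k => ENNReal.toReal_nonneg
  have hcpos : ∀ k, 0 < c k := fun k =>
    add_pos_of_nonneg_of_pos (div_nonneg (hDnn k) (hbpos k).le) (by positivity)
  -- real form of the L^s bound
  have hDle : ∀ k, D k ≤ V k ^ s.toReal⁻¹ * (C / ((k:ℝ) + 1) ^ m) := by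
    intro k
    have hfin : (volume (closedBall (0 : Rn n) ((k:ℝ) + 1))) ^ s.toReal⁻¹ *
        ENNReal.ofReal (C / ((k:ℝ) + 1) ^ m) ≠ ∞ :=
      (ENNReal.mul_lt_top
        (ENNReal.rpow_lt_top_of_nonneg (inv_nonneg.mpr hspos.le) measure_closedBall_lt_top.ne)
        ENNReal.ofReal_lt_top).ne
    have h := ENNReal.toReal_mono hfin (hgle k)
    rwa [ENNReal.toReal_mul, ← ENNReal.toReal_rpow, ENNReal.toReal_ofReal (by positivity)] at h
  -- scaling of ball volumes
  have hVeq : ∀ k, V k = ((k:ℝ) + 1) ^ n * W := by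
    intro k
    show (volume (closedBall (0 : Rn n) ((k:ℝ) + 1))).toReal
      = ((k:ℝ) + 1) ^ n * (volume (ball (0 : Rn n) 1)).toReal
    rw [Measure.addHaar_closedBall volume 0 (by positivity : (0:ℝ) ≤ (k:ℝ) + 1)]
    rw [ENNReal.toReal_mul, ENNReal.toReal_ofReal (by positivity)]
    congr 2
    rw [finrank_euclideanSpace, Fintype.card_fin]
  -- key upper bound for D k / b k
  have hub : ∀ k, D k / b k ≤ (C * W ^ β) * ((k:ℝ) + 1) ^ ((n:ℝ) * β - (m:ℝ)) := by
    intro k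
    have ht : (0:ℝ) < (k:ℝ) + 1 := by positivity
    have h1 : D k / b k ≤ (V k ^ s.toReal⁻¹ * (C / ((k:ℝ) + 1) ^ m)) / b k := by
      rw [div_eq_mul_inv, div_eq_mul_inv]
      exact mul_le_mul_of_nonneg_right (hDle k) (inv_nonneg.mpr (hbpos k).le)
    refine h1.trans (le_of_eq ?_)
    have e1 : V k ^ s.toReal⁻¹ / V k ^ e = V k ^ β := by
      rw [← Real.rpow_sub (hVpos k)]
      congr 1
      rw [he, hβdef]; ring
    have e2 : V k ^ β = ((k:ℝ) + 1) ^ ((n:ℝ) * β) * W ^ β := by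
      rw [hVeq k, Real.mul_rpow (by positivity) hWpos.le, ← Real.rpow_natCast ((k:ℝ) + 1) n,
        ← Real.rpow_mul ht.le]
    have e0 : ((k:ℝ) + 1) ^ (-(m:ℝ)) = (((k:ℝ) + 1) ^ m)⁻¹ := by
      rw [Real.rpow_neg ht.le, Real.rpow_natCast]
    have e3 : ((k:ℝ) + 1) ^ ((n:ℝ) * β) * ((k:ℝ) + 1) ^ (-(m:ℝ))
        = ((k:ℝ) + 1) ^ ((n:ℝ) * β - (m:ℝ)) := by
      rw [← Real.rpow_add ht]; ring_nf
    calc (V k ^ s.toReal⁻¹ * (C / ((k:ℝ) + 1) ^ m)) / V k ^ e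
        = (V k ^ s.toReal⁻¹ / V k ^ e) * (C * ((k:ℝ) + 1) ^ (-(m:ℝ))) := by
          rw [e0]; ring
      _ = V k ^ β * (C * ((k:ℝ) + 1) ^ (-(m:ℝ))) := by rw [e1]
      _ = (((k:ℝ) + 1) ^ ((n:ℝ) * β) * W ^ β) * (C * ((k:ℝ) + 1) ^ (-(m:ℝ))) := by rw [e2]
      _ = (C * W ^ β) * (((k:ℝ) + 1) ^ ((n:ℝ) * β) * ((k:ℝ) + 1) ^ (-(m:ℝ))) := by ring
      _ = (C * W ^ β) * ((k:ℝ) + 1) ^ ((n:ℝ) * β - (m:ℝ)) := by rw [e3]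
  -- summability
  have hshift : Summable (fun k : ℕ => ((k:ℝ) + 1) ^ (-2 : ℝ)) := by
    have h0 : Summable (fun k : ℕ => (k:ℝ) ^ (-2 : ℝ)) :=
      Real.summable_nat_rpow.mpr (by norm_num)
    have h1 := (summable_nat_add_iff (f := fun k : ℕ => (k:ℝ) ^ (-2 : ℝ)) 1).mpr h0
    refine h1.congr fun k => ?_
    push_cast
    rfl
  have hsum1 : Summable (fun k => (D k / b k) ^ min p 1) := by
    refine Summable.of_nonneg_of_le
      (fun k => Real.rpow_nonneg (div_nonneg (hDnn k) (hbpos k).le) _)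
      (fun k => ?_) ((hshift.mul_left ((C * W ^ β) ^ min p 1)))
    have ht : (0:ℝ) < (k:ℝ) + 1 := by positivity
    have hCW : (0:ℝ) ≤ C * W ^ β := by positivity
    calc (D k / b k) ^ min p 1
        ≤ ((C * W ^ β) * ((k:ℝ) + 1) ^ ((n:ℝ) * β - (m:ℝ))) ^ min p 1 :=
          Real.rpow_le_rpow (div_nonneg (hDnn k) (hbpos k).le) (hub k) hq0.le
      _ = (C * W ^ β) ^ min p 1 * (((k:ℝ) + 1) ^ ((n:ℝ) * β - (m:ℝ))) ^ min p 1 :=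
          Real.mul_rpow hCW (Real.rpow_nonneg ht.le _)
      _ = (C * W ^ β) ^ min p 1 * ((k:ℝ) + 1) ^ (((n:ℝ) * β - (m:ℝ)) * min p 1) := by
          rw [← Real.rpow_mul ht.le]
      _ ≤ (C * W ^ β) ^ min p 1 * ((k:ℝ) + 1) ^ (-2 : ℝ) := by
          have h1 : (1:ℝ) ≤ (k:ℝ) + 1 := by
            have : (0:ℝ) ≤ (k:ℝ) := Nat.cast_nonneg k
            linarith
          exact mul_le_mul_of_nonneg_left
            (Real.rpow_le_rpow_of_exponent_le h1 hexp) (by positivity)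
  have hsum2 : Summable (fun k : ℕ => ((1/2 : ℝ) ^ k) ^ min p 1) := by
    have heq : ∀ k : ℕ, ((1/2 : ℝ) ^ k) ^ min p 1 = ((1/2 : ℝ) ^ min p 1) ^ k := by
      intro k
      rw [← Real.rpow_natCast (1/2 : ℝ) k, ← Real.rpow_natCast ((1/2 : ℝ) ^ min p 1) k,
        ← Real.rpow_mul (by norm_num), ← Real.rpow_mul (by norm_num), mul_comm]
    refine Summable.congr ?_ fun k => (heq k).symm
    exact summable_geometric_of_lt_one (by positivity)
      (Real.rpow_lt_one (by norm_num) (by norm_num) hq0)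
  have hsummc : Summable (fun k => |c k| ^ min p 1) := by
    refine Summable.of_nonneg_of_le (fun k => Real.rpow_nonneg (abs_nonneg _) _)
      (fun k => ?_) (hsum1.add hsum2)
    rw [abs_of_pos (hcpos k), hc]
    exact aux_rpow_add_le (div_nonneg (hDnn k) (hbpos k).le) (by positivity) hq0.le hq1
  -- the decomposition
  refine ⟨c, fun k => (c k)⁻¹ • g k, ?_, hsummc, ?_⟩
  · -- blocks
    intro k
    refine ⟨((f.continuous.measurable.indicator (hAmeas k)).const_smul _), 0, (k:ℝ) + 1,
      by positivity, ?_, ?_⟩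
    · intro x hx
      have hxA : x ∉ A k := fun hxA => hx (hAsub k hxA)
      simp [hg, Set.indicator_of_notMem hxA]
    · rw [eLpNorm_const_smul, Real.enorm_eq_ofReal (inv_nonneg.mpr (hcpos k).le),
        ← ENNReal.ofReal_toReal (hgfin k), ← ENNReal.ofReal_mul (inv_nonneg.mpr (hcpos k).le)]
      refine ENNReal.ofReal_le_ofReal ?_
      have hDcb : D k ≤ c k * b k := by
        have h1 : D k / b k ≤ c k := by
          rw [hc]
          exact le_add_of_nonneg_right (by positivity)
        exact (div_le_iff₀ (hbpos k)).mp h1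
      calc (c k)⁻¹ * (eLpNorm (g k) s volume).toReal = (c k)⁻¹ * D k := by rw [hD]
        _ ≤ b k := by
            rw [inv_mul_le_iff₀ (hcpos k)]
            exact hDcb
        _ = (volume (closedBall (0 : Rn n) ((k:ℝ) + 1))).toReal
              ^ (-α / (p * ↑n) - 1 / p + s.toReal⁻¹) := by rw [hb, hV, he]
  · -- a.e. (in fact everywhere) convergence
    refine Eventually.of_forall fun x => ?_
    have hx0 : x ∈ A (⌊‖x‖⌋₊) := ⟨Nat.floor_le (norm_nonneg x), Nat.lt_floor_add_one _⟩
    have hother : ∀ k, k ≠ ⌊‖x‖⌋₊ → c k * ((c k)⁻¹ • g k) x = 0 := by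
      intro k hk
      have hxA : x ∉ A k := by
        intro hxA
        exact hk ((Nat.floor_eq_iff (norm_nonneg x)).mpr ⟨hxA.1, hxA.2⟩).symm
      simp [hg, Set.indicator_of_notMem hxA]
    have hsum := hasSum_single (f := fun k => c k * ((c k)⁻¹ • g k) x) ⌊‖x‖⌋₊ hother
    have hval : c ⌊‖x‖⌋₊ * ((c ⌊‖x‖⌋₊)⁻¹ • g ⌊‖x‖⌋₊) x = f x := by
      simp only [Pi.smul_apply, smul_eq_mul, hg, Set.indicator_of_mem hx0]
      field_simp [(hcpos ⌊‖x‖⌋₊).ne']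
    convert hsum using 1
    exact hval.symm
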